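/- If the zero ideal is the unique maximal homogeneous ideal of a nontrivial G-graded commutative ring R (equivalently, every proper homogeneous ideal of R is the zero ideal), then every finitely generated G-graded module over R is a free R-module. -/

import Mathlib

private lemma decompose_smul_proj {G R M : Type*} [AddCommGroup G] [DecidableEq G] [CommRing R]
    (𝒜 : G → AddSubgroup R) [GradedRing 𝒜]
    [AddCommGroup M] [Module R M] (ℳ : G → AddSubgroup M)
    [DirectSum.Decomposition ℳ] [SetLike.GradedSMul 𝒜 ℳ]
    (r : R) (g h : G) (m : M) (hm : m ∈ ℳ g) :
    (DirectSum.decompose ℳ (r • m) h : M) = (DirectSum.decompose 𝒜 r (h - g) : R) • m := by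
  classical
  let F : M →+ M :=
    { toFun := fun x => (DirectSum.decompose ℳ x h : M)
      map_zero' := by simp
      map_add' := by intros; simp }
  have hF : ∀ x : M, F x = (DirectSum.decompose ℳ x h : M) := fun _ => rfl
  nth_rewrite 1 [← DirectSum.sum_support_decompose 𝒜 r]
  rw [Finset.sum_smul, ← hF, map_sum]
  have hterm : ∀ k ∈ (DirectSum.decompose 𝒜 r).support,
      F ((DirectSum.decompose 𝒜 r k : R) • m)
        = if k = h - g then (DirectSum.decompose 𝒜 r k : R) • m else 0 := by
    intro k _
    have hmem : (DirectSum.decompose 𝒜 r k : R) • m ∈ ℳ (k + g) :=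
      SetLike.GradedSMul.smul_mem (DirectSum.decompose 𝒜 r k).2 hm
    by_cases hk : k = h - g
    · subst hk
      rw [hF, if_pos rfl, sub_add_cancel] at *
      exact DirectSum.decompose_of_mem_same ℳ hmem
    · rw [hF, if_neg hk]
      exact DirectSum.decompose_of_mem_ne ℳ hmem (by
        intro hkg; exact hk (by rw [← hkg]; abel))
  rw [Finset.sum_congr rfl hterm, Finset.sum_ite_eq' _ (h - g)]
  by_cases hsup : h - g ∈ (DirectSum.decompose 𝒜 r).support
  · rw [if_pos hsup]
  · rw [if_neg hsup]
    have : DirectSum.decompose 𝒜 r (h - g) = 0 := DFinsupp.notMem_support_iff.mp hsup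
    rw [this]; simp


/-- If the zero ideal is the unique maximal homogeneous ideal of a nontrivial `G`-graded
commutative ring `R` (equivalently, every proper homogeneous ideal of `R` is zero), then
every finitely generated `G`-graded module over `R` is a free `R`-module. -/
theorem free_of_zero_unique_maximal_homogeneous {G R M : Type*} [AddCommGroup G]
    [DecidableEq G] [CommRing R] [Nontrivial R]
    (𝒜 : G → AddSubgroup R) [GradedRing 𝒜]
    (hzero : ∀ I : Ideal R, Ideal.IsHomogeneous 𝒜 I → I ≠ ⊤ → I = ⊥)
    [AddCommGroup M] [Module R M] (ℳ : G → AddSubgroup M)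
    [DirectSum.Decomposition ℳ] [SetLike.GradedSMul 𝒜 ℳ]
    [Module.Finite R M] :
    Module.Free R M := by
  classical
  -- every nonzero homogeneous element is a unit
  have hunit : ∀ r : R, r ≠ 0 → SetLike.IsHomogeneousElem 𝒜 r → IsUnit r := by
    rintro r hr hhom
    by_contra hu
    have hspan : Ideal.span {r} ≠ ⊤ := fun h => hu (Ideal.span_singleton_eq_top.mp h)
    have hhomI : Ideal.IsHomogeneous 𝒜 (Ideal.span {r}) :=
      Ideal.homogeneous_span 𝒜 {r} (by rintro x hx; rw [Set.mem_singleton_iff] at hx; subst hx; exact hhom)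
    have hb := hzero _ hhomI hspan
    exact hr (Ideal.span_singleton_eq_bot.mp hb)
  -- main induction : a finite homogeneous generating family yields freeness
  have main : ∀ n : ℕ, ∀ v : Fin n → M, (∀ i, SetLike.IsHomogeneousElem ℳ (v i)) →
      Submodule.span R (Set.range v) = ⊤ → Module.Free R M := by
    intro n
    induction n using Nat.strong_induction_on with
    | _ n ih =>
    intro v hv hspan
    by_cases hli : LinearIndependent R v
    · exact Module.Free.of_basis (Module.Basis.mk hli (by rw [hspan]))
    · obtain ⟨c, hc0, j, hcj⟩ := Fintype.not_linearIndependent_iff.mp hli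
      rcases n with _ | m
      · exact absurd linearIndependent_empty_type hli
      choose g hg using hv
      -- find a nonzero homogeneous component of c j
      obtain ⟨k, hk⟩ : ∃ k, (DirectSum.decompose 𝒜 (c j) k : R) ≠ 0 := by
        by_contra hall
        push_neg at hall
        apply hcj
        have := DirectSum.sum_support_decompose 𝒜 (c j)
        rw [← this]
        exact Finset.sum_eq_zero fun i _ => hall i
      set d : Fin (m + 1) → R := fun i =>
        (DirectSum.decompose 𝒜 (c i) (k + g j - g i) : R) with hd
      have hrel : ∑ i, d i • v i = 0 := by
        have h0 := congrArg (fun x => (DirectSum.decompose ℳ x (k + g j) : M)) hc0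
        simp only at h0
        let F : M →+ M :=
          { toFun := fun x => (DirectSum.decompose ℳ x (k + g j) : M)
            map_zero' := by simp
            map_add' := by intros; simp }
        have hF : ∀ x : M, F x = (DirectSum.decompose ℳ x (k + g j) : M) := fun _ => rfl
        have : F (∑ i, c i • v i) = F 0 := congrArg F hc0
        rw [map_sum, map_zero] at this
        rw [← this]
        refine Finset.sum_congr rfl fun i _ => ?_
        rw [hF, decompose_smul_proj 𝒜 ℳ (c i) (g i) (k + g j) (v i) (hg i)]
      have hdj : d j ≠ 0 := by
        have hkk : k + g j - g j = k := by abel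
        show (DirectSum.decompose 𝒜 (c j) (k + g j - g j) : R) ≠ 0
        rw [hkk]
        exact hk
      obtain ⟨u, hu⟩ := hunit (d j) hdj ⟨_, (DirectSum.decompose 𝒜 (c j) _).2⟩
      -- the smaller family
      set w : Fin m → M := fun i => v (j.succAbove i) with hw
      have hvj : v j ∈ Submodule.span R (Set.range w) := by
        have hsum : d j • v j + ∑ i : Fin m, d (j.succAbove i) • v (j.succAbove i) = 0 := by
          rw [← Fin.sum_univ_succAbove (fun i => d i • v i) j]; exact hrel
        have hvj' : v j = (↑u⁻¹ : R) • (- ∑ i : Fin m, d (j.succAbove i) • v (j.succAbove i)) := by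
          rw [← eq_neg_of_add_eq_zero_left hsum]
          rw [← hu, smul_smul, Units.inv_mul, one_smul]
        rw [hvj']
        refine Submodule.smul_mem _ _ (Submodule.neg_mem _ (Submodule.sum_mem _ fun i _ => ?_))
        exact Submodule.smul_mem _ _ (Submodule.subset_span ⟨i, rfl⟩)
      have hspanw : Submodule.span R (Set.range w) = ⊤ := by
        rw [← top_le_iff, ← hspan, Submodule.span_le]
        rintro x ⟨i, rfl⟩
        by_cases hij : i = j
        · subst hij; exact hvj
        · obtain ⟨i', rfl⟩ := Fin.exists_succAbove_eq hij
          exact Submodule.subset_span ⟨i', rfl⟩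
      exact ih m (Nat.lt_succ_self m) w (fun i => ⟨g (j.succAbove i), hg (j.succAbove i)⟩) hspanw
  -- produce a finite homogeneous generating family
  obtain ⟨s, hs⟩ := Module.Finite.fg_top (R := R) (M := M)
  let T : Finset M := s.biUnion fun x =>
    (DirectSum.decompose ℳ x).support.image fun gg => (DirectSum.decompose ℳ x gg : M)
  have hThom : ∀ y ∈ T, SetLike.IsHomogeneousElem ℳ y := by
    intro y hy
    simp only [T, Finset.mem_biUnion, Finset.mem_image] at hy
    obtain ⟨x, _, gg, _, rfl⟩ := hy
    exact ⟨gg, (DirectSum.decompose ℳ x gg).2⟩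
  have hTspan : Submodule.span R (T : Set M) = ⊤ := by
    rw [← top_le_iff, ← hs, Submodule.span_le]
    intro x hx
    have hdecomp := DirectSum.sum_support_decompose ℳ x
    rw [← hdecomp]
    refine Submodule.sum_mem _ fun gg hgg => Submodule.subset_span ?_
    simp only [T, Finset.coe_biUnion, Set.mem_iUnion, Finset.coe_image, Set.mem_image]
    exact ⟨x, hx, gg, hgg, rfl⟩
  let e := T.equivFin
  refine main T.card (fun i => (e.symm i : M)) (fun i => hThom _ (e.symm i).2) ?_
  have : Set.range (fun i => ((e.symm i : T) : M)) = (T : Set M) := by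
    ext y
    constructor
    · rintro ⟨i, rfl⟩; exact (e.symm i).2
    · intro hy; exact ⟨e ⟨y, hy⟩, by simp⟩
  rw [this, hTspan]
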